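/- Let g ≥ 2. With the local x-coordinates x_0,…,x_g defined by the recursion x_{m+1} = x_m + a(i_{m+1}, j_{m+1}, k̄_m) − a(i_m, j_m, k̄_m) in ZMod p (with x_0 ∈ ZMod p arbitrary), and the local y-coordinates y_0,…,y_g defined analogously from the shift function b, the closing conditions x_g = x_0 and y_g = y_0 hold simultaneously if and only if Σ_{m=0}^{g−1} ( a(i_m, j_m, k̄_m) − a(i_{m+1}, j_{m+1}, k̄_m) ) = 0 in ZMod p and Σ_{m=0}^{g−1} ( b(i_m, j_m, k̄_m) − b(i_{m+1}, j_{m+1}, k̄_m) ) = 0 in ZMod p, where indices are read with (i_g, j_g) = (i_0, j_0). -/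
import Mathlib

lemma sum_rec (p : ℕ) (g : ℕ) (x : ℕ → ZMod p) (c : ℕ → ZMod p)
    (hx : ∀ m < g, x (m + 1) = x m + c m) :
    ∀ n ≤ g, x n = x 0 + ∑ m ∈ Finset.range n, c m := by
  intro n hn
  induction n with
  | zero => simp
  | succ n ih =>
    rw [hx n (by omega), ih (by omega), Finset.sum_range_succ]
    ring

/-- Theorem 1 (general condition for a `2g`-cycle): tracing a closed path of length `2g`
through the stacked permutation tensors, the local `x`- and `y`-coordinates obey the
stated recursions, and the path closes (`x_g = x_0` and `y_g = y_0`) if and only if the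
two alternating shift sums vanish modulo `p`. -/
theorem stmt_2 (p : ℕ) (hp : 2 < p) {ι κ : Type*} (g : ℕ) (hg : 2 ≤ g)
    (a b : ι → ι → κ → ZMod p)
    (i j : ℕ → ι) (kbar : ℕ → κ)
    (hclose : i g = i 0 ∧ j g = j 0)
    (x y : ℕ → ZMod p)
    (hx : ∀ m < g, x (m + 1) =
      x m + a (i (m + 1)) (j (m + 1)) (kbar m) - a (i m) (j m) (kbar m))
    (hy : ∀ m < g, y (m + 1) =
      y m + b (i (m + 1)) (j (m + 1)) (kbar m) - b (i m) (j m) (kbar m)) :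
    (x g = x 0 ∧ y g = y 0) ↔
      ((∑ m ∈ Finset.range g,
          (a (i m) (j m) (kbar m) - a (i (m + 1)) (j (m + 1)) (kbar m)) = 0) ∧
       (∑ m ∈ Finset.range g,
          (b (i m) (j m) (kbar m) - b (i (m + 1)) (j (m + 1)) (kbar m)) = 0)) := by
  have hxg := sum_rec p g x
    (fun m => a (i (m + 1)) (j (m + 1)) (kbar m) - a (i m) (j m) (kbar m))
    (fun m hm => by rw [hx m hm]; ring) g le_rfl
  have hyg := sum_rec p g y
    (fun m => b (i (m + 1)) (j (m + 1)) (kbar m) - b (i m) (j m) (kbar m))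
    (fun m hm => by rw [hy m hm]; ring) g le_rfl
  have hs : ∀ f : ι → ι → κ → ZMod p,
      ∑ m ∈ Finset.range g, (f (i m) (j m) (kbar m) - f (i (m+1)) (j (m+1)) (kbar m))
      = -∑ m ∈ Finset.range g, (f (i (m+1)) (j (m+1)) (kbar m) - f (i m) (j m) (kbar m)) := by
    intro f
    rw [← Finset.sum_neg_distrib]
    exact Finset.sum_congr rfl fun m _ => by ring
  rw [hxg, hyg, hs a, hs b]
  constructor
  · rintro ⟨h1, h2⟩
    constructor
    · rw [neg_eq_zero]; linear_combination h1
    · rw [neg_eq_zero]; linear_combination h2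
  · rintro ⟨h1, h2⟩
    rw [neg_eq_zero] at h1 h2
    constructor
    · linear_combination h1
    · linear_combination h2
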